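/- Let C₅ be the 5-cycle with vertices v₁,…,v₅ and edges e_j joining v_j and v_{j+1} (indices mod 5), and let k be a natural number. Two distinct vertex configurations f and g of weight k are adjacent in the pebble configuration graph C₅[k] if and only if there exists an edge configuration ψ of weight k that is adjacent to both f and g. -/

import Mathlib

open Finset

/-- A configuration of `k` identical pebbles on the vertex set `V`. -/
def Config (V : Type*) [Fintype V] (k : ℕ) : Type _ :=
  {f : V → ℕ // ∑ v, f v = k}

/-- The pebble configuration graph `G[k]`: two distinct configurations are adjacent
iff there is a transport `m` moving each pebble along an edge of `G` or keeping it in place. -/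
def PebbleGraph {V : Type*} [Fintype V] (G : SimpleGraph V) (k : ℕ) :
    SimpleGraph (Config V k) where
  Adj f g := f ≠ g ∧ ∃ m : V → V → ℕ,
    (∀ u w, m u w ≠ 0 → u = w ∨ G.Adj u w) ∧
    (∀ u, ∑ w, m u w = f.1 u) ∧ (∀ u, ∑ w, m w u = g.1 u)
  symm := ⟨by
    rintro f g ⟨hne, m, h1, h2, h3⟩
    exact ⟨hne.symm, fun u w => m w u,
      fun u w h => (h1 w u h).imp Eq.symm fun h => G.symm.symm _ _ h, h3, h2⟩⟩
  loopless := ⟨fun f h => h.1 rfl⟩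

/-- The independence number of a graph: the supremum of sizes of finite sets of
pairwise non-adjacent vertices. -/
noncomputable def indepNum {W : Type*} (G : SimpleGraph W) : ℕ :=
  sSup {n | ∃ s : Finset W, (↑s : Set W).Pairwise (fun a b => ¬ G.Adj a b) ∧ s.card = n}

/-- The 5-cycle on vertices `Fin 5`, with `u` adjacent to `u + 1` (mod 5). -/
def C5 : SimpleGraph (Fin 5) where
  Adj u w := u ≠ w ∧ (w = u + 1 ∨ u = w + 1)
  symm := ⟨fun _ _ h => ⟨h.1.symm, h.2.symm⟩⟩
  loopless := ⟨fun _ h => h.1 rfl⟩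

/-- An edge configuration `ψ` (pebbles on the edges `e₀, …, e₄` of the 5-cycle, where
`e_j = {v_j, v_{j+1}}`) is adjacent to a vertex configuration `f` if every pebble of `f`
can be moved to an adjacent edge so as to produce `ψ`. -/
def VEAdj (k : ℕ) (f ψ : Config (Fin 5) k) : Prop :=
  ∃ m : Fin 5 → Fin 5 → ℕ,
    (∀ v e, m v e ≠ 0 → v = e ∨ v = e + 1) ∧
    (∀ v, ∑ e, m v e = f.1 v) ∧
    (∀ e, ∑ v, m v e = ψ.1 e)

lemma sum5 (v : Fin 5) (r : Fin 5 → ℕ) :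
    ∑ e, r e = r v + r (v+1) + r (v+2) + r (v+3) + r (v+4) := by
  rw [← Fintype.sum_equiv (Equiv.addLeft v) (fun j => r (v+j)) r (fun j => rfl),
    Fin.sum_univ_five, add_zero]


/-- Two distinct vertex configurations `f, g` of weight `k` are adjacent in `C₅[k]`
iff some edge configuration of weight `k` is adjacent to both of them. -/
theorem C5_pebble_adj_iff_exists_edgeConfig (k : ℕ) (f g : Config (Fin 5) k)
    (hne : f ≠ g) :
    (PebbleGraph C5 k).Adj f g ↔ ∃ ψ : Config (Fin 5) k, VEAdj k f ψ ∧ VEAdj k g ψ := by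
  have n1 : ∀ u : Fin 5, u ≠ u + 1 := by decide
  have n2 : ∀ u : Fin 5, u ≠ u + 2 := by decide
  have n3 : ∀ u : Fin 5, u ≠ u + 3 := by decide
  have n4 : ∀ u : Fin 5, u ≠ u + 4 := by decide
  have p1 : ∀ u : Fin 5, u + 1 + 4 = u := by decide
  have p2 : ∀ u : Fin 5, u + 2 + 4 = u + 1 := by decide
  have p3 : ∀ u : Fin 5, u + 3 + 4 = u + 2 := by decide
  have p4 : ∀ u : Fin 5, u + 4 + 4 = u + 3 := by decide
  have a1 : ∀ u : Fin 5, u + 1 + 1 = u + 2 := by decide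
  have a2 : ∀ u : Fin 5, u + 2 + 1 = u + 3 := by decide
  have a3 : ∀ u : Fin 5, u + 3 + 1 = u + 4 := by decide
  have q1 : ∀ u : Fin 5, u + 4 + 1 = u := by decide
  constructor
  · rintro ⟨-, m, hm, hrow, hcol⟩
    have hm' : ∀ u w : Fin 5, u ≠ w → w ≠ u + 1 → u ≠ w + 1 → m u w = 0 := by
      intro u w h1 h2 h3
      by_contra h
      rcases hm u w h with h' | h'
      · exact h1 h'
      · obtain ⟨-, h'' | h''⟩ := h'
        exacts [h2 h'', h3 h'']
    have z2 : ∀ u : Fin 5, m u (u+2) = 0 := fun u =>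
      hm' u (u+2) (n2 u) ((by decide : ∀ u : Fin 5, u+2 ≠ u+1) u)
        ((by decide : ∀ u : Fin 5, u ≠ u+2+1) u)
    have z3 : ∀ u : Fin 5, m u (u+3) = 0 := fun u =>
      hm' u (u+3) (n3 u) ((by decide : ∀ u : Fin 5, u+3 ≠ u+1) u)
        ((by decide : ∀ u : Fin 5, u ≠ u+3+1) u)
    have w2 : ∀ v : Fin 5, m (v+2) v = 0 := fun v =>
      hm' (v+2) v ((by decide : ∀ u : Fin 5, u+2 ≠ u) v)
        ((by decide : ∀ u : Fin 5, u ≠ u+2+1) v)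
        ((by decide : ∀ u : Fin 5, u+2 ≠ u+1) v)
    have w3 : ∀ v : Fin 5, m (v+3) v = 0 := fun v =>
      hm' (v+3) v ((by decide : ∀ u : Fin 5, u+3 ≠ u) v)
        ((by decide : ∀ u : Fin 5, u ≠ u+3+1) v)
        ((by decide : ∀ u : Fin 5, u+3 ≠ u+1) v)
    have hrow3 : ∀ u : Fin 5, ∑ w, m u w = m u u + m u (u+1) + m u (u+4) := by
      intro u
      rw [sum5 u, z2 u, z3 u]
      omega
    have hcol3 : ∀ v : Fin 5, ∑ w, m w v = m v v + m (v+1) v + m (v+4) v := by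
      intro v
      rw [sum5 v (fun w => m w v)]
      simp only [w2 v, w3 v, q1 v]
      omega
    have hk : ∑ u : Fin 5, (m u u + m u (u+1) + m u (u+4)) = k := by
      rw [← f.2]
      exact Finset.sum_congr rfl fun u _ => (hrow3 u).symm.trans (hrow u)
    have hre : ∑ e : Fin 5, m (e+1) e = ∑ u : Fin 5, m u (u+4) := by
      refine Fintype.sum_equiv (Equiv.addRight 1) _ _ fun e => ?_
      simp only [Equiv.coe_addRight, p1]
    have hψw : ∑ e : Fin 5, (m e (e+1) + m (e+1) e + m e e) = k := by
      rw [← hk, Finset.sum_add_distrib, Finset.sum_add_distrib,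
        Finset.sum_add_distrib, Finset.sum_add_distrib, hre]
      omega
    refine ⟨⟨fun e => m e (e+1) + m (e+1) e + m e e, hψw⟩,
      ⟨fun v e => (if e = v then m v (v+1) + m v v else 0)
        + (if e = v+4 then m v (v+4) else 0), ?_, ?_, ?_⟩,
      ⟨fun v e => (if e = v then m (v+1) v + m v v else 0)
        + (if e = v+4 then m (v+4) v else 0), ?_, ?_, ?_⟩⟩
    · intro v e h
      by_cases h1 : e = v
      · exact Or.inl h1.symm
      · by_cases h2 : e = v + 4
        · subst h2; exact Or.inr (q1 v).symm
        · simp [h1, h2] at h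
    · intro v
      rw [Finset.sum_add_distrib, Finset.sum_ite_eq' univ v, Finset.sum_ite_eq' univ (v+4),
        if_pos (mem_univ _), if_pos (mem_univ _), ← hrow v, hrow3 v]
      omega
    · intro e
      rw [sum5 e (fun v => (if e = v then m v (v+1) + m v v else 0)
        + (if e = v+4 then m v (v+4) else 0))]
      simp [p1, p2, p3, p4, n1 e, n2 e, n3 e, n4 e]
      omega
    · intro v e h
      by_cases h1 : e = v
      · exact Or.inl h1.symm
      · by_cases h2 : e = v + 4
        · subst h2; exact Or.inr (q1 v).symm
        · simp [h1, h2] at h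
    · intro v
      rw [Finset.sum_add_distrib, Finset.sum_ite_eq' univ v, Finset.sum_ite_eq' univ (v+4),
        if_pos (mem_univ _), if_pos (mem_univ _), ← hcol v, hcol3 v]
      omega
    · intro e
      rw [sum5 e (fun v => (if e = v then m (v+1) v + m v v else 0)
        + (if e = v+4 then m (v+4) v else 0))]
      simp [p1, p2, p3, p4, n1 e, n2 e, n3 e, n4 e]
      omega
  · rintro ⟨ψ, ⟨mf, hfS, hfR, hfC⟩, ⟨mg, hgS, hgR, hgC⟩⟩
    have hf0 : ∀ v e : Fin 5, v ≠ e → v ≠ e + 1 → mf v e = 0 := by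
      intro v e h1 h2; by_contra h
      rcases hfS v e h with h' | h'
      exacts [h1 h', h2 h']
    have hg0 : ∀ v e : Fin 5, v ≠ e → v ≠ e + 1 → mg v e = 0 := by
      intro v e h1 h2; by_contra h
      rcases hgS v e h with h' | h'
      exacts [h1 h', h2 h']
    have hrowmf : ∀ v : Fin 5, f.1 v = mf v v + mf v (v+4) := by
      intro v
      rw [← hfR v, sum5 v (mf v),
        hf0 v (v+1) (n1 v) ((by decide : ∀ u : Fin 5, u ≠ u+1+1) v),
        hf0 v (v+2) (n2 v) ((by decide : ∀ u : Fin 5, u ≠ u+2+1) v),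
        hf0 v (v+3) (n3 v) ((by decide : ∀ u : Fin 5, u ≠ u+3+1) v)]
      omega
    have hrowmg : ∀ v : Fin 5, g.1 v = mg v v + mg v (v+4) := by
      intro v
      rw [← hgR v, sum5 v (mg v),
        hg0 v (v+1) (n1 v) ((by decide : ∀ u : Fin 5, u ≠ u+1+1) v),
        hg0 v (v+2) (n2 v) ((by decide : ∀ u : Fin 5, u ≠ u+2+1) v),
        hg0 v (v+3) (n3 v) ((by decide : ∀ u : Fin 5, u ≠ u+3+1) v)]
      omega
    have hbal : ∀ e : Fin 5, mf e e + mf (e+1) e = mg e e + mg (e+1) e := by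
      intro e
      have h1 : ∑ v, mf v e = mf e e + mf (e+1) e := by
        rw [sum5 e (fun v => mf v e),
          hf0 (e+2) e ((by decide : ∀ u : Fin 5, u+2 ≠ u) e)
            ((by decide : ∀ u : Fin 5, u+2 ≠ u+1) e),
          hf0 (e+3) e ((by decide : ∀ u : Fin 5, u+3 ≠ u) e)
            ((by decide : ∀ u : Fin 5, u+3 ≠ u+1) e),
          hf0 (e+4) e ((by decide : ∀ u : Fin 5, u+4 ≠ u) e)
            ((by decide : ∀ u : Fin 5, u+4 ≠ u+1) e)]
        omega
      have h2 : ∑ v, mg v e = mg e e + mg (e+1) e := by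
        rw [sum5 e (fun v => mg v e),
          hg0 (e+2) e ((by decide : ∀ u : Fin 5, u+2 ≠ u) e)
            ((by decide : ∀ u : Fin 5, u+2 ≠ u+1) e),
          hg0 (e+3) e ((by decide : ∀ u : Fin 5, u+3 ≠ u) e)
            ((by decide : ∀ u : Fin 5, u+3 ≠ u+1) e),
          hg0 (e+4) e ((by decide : ∀ u : Fin 5, u+4 ≠ u) e)
            ((by decide : ∀ u : Fin 5, u+4 ≠ u+1) e)]
        omega
      rw [← h1, ← h2, hfC e, hgC e]
    have hbal' : ∀ u : Fin 5, mf (u+4) (u+4) + mf u (u+4)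
        = mg (u+4) (u+4) + mg u (u+4) := by
      intro u
      have := hbal (u+4)
      rwa [q1 u] at this
    refine ⟨hne, fun u w =>
      (if w = u+1 then mf u u - mg u u else 0)
      + (if w = u+4 then mg (u+4) (u+4) - mf (u+4) (u+4) else 0)
      + (if w = u then (mf u u - (mf u u - mg u u))
          + (mf u (u+4) - (mg (u+4) (u+4) - mf (u+4) (u+4))) else 0), ?_, ?_, ?_⟩
    · intro u w h
      by_cases h1 : w = u + 1
      · exact Or.inr ⟨h1 ▸ n1 u, Or.inl h1⟩
      · by_cases h2 : w = u + 4
        · exact Or.inr ⟨h2 ▸ n4 u, Or.inr (h2 ▸ (q1 u).symm)⟩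
        · by_cases h3 : w = u
          · exact Or.inl h3.symm
          · simp [h1, h2, h3] at h
    · intro u
      rw [Finset.sum_add_distrib, Finset.sum_add_distrib,
        Finset.sum_ite_eq' univ (u+1), Finset.sum_ite_eq' univ (u+4),
        Finset.sum_ite_eq' univ u,
        if_pos (mem_univ _), if_pos (mem_univ _), if_pos (mem_univ _)]
      have h1 := hrowmf u
      have h2 := hbal' u
      omega
    · intro u
      rw [sum5 u (fun w =>
        (if u = w+1 then mf w w - mg w w else 0)
        + (if u = w+4 then mg (w+4) (w+4) - mf (w+4) (w+4) else 0)
        + (if u = w then (mf w w - (mf w w - mg w w))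
            + (mf w (w+4) - (mg (w+4) (w+4) - mf (w+4) (w+4))) else 0))]
      simp [a1, a2, a3, q1, p1, p2, p3, p4, n1 u, n2 u, n3 u, n4 u,
        (n1 u).symm, (n2 u).symm, (n3 u).symm, (n4 u).symm]
      have h1 := hrowmg u
      have h2 := hbal' u
      omega
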